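/- With R, D, d_n, e_n as above, in Der(R) one has [d_m, d_n] = (n−m)(d_{m+n+1} + 4 d_{m+n}). -/

import Mathlib

set_option synthInstance.maxHeartbeats 1000000
set_option maxHeartbeats 1000000

open MvPolynomial in
/-- `R = ℂ[t, t⁻¹, u] / (u² − t² − 4t)`, modelled as `ℂ[x₀,x₁,x₂]` modulo the
ideal generated by `x₀x₁ − 1` (making `x₀ = t` invertible with inverse `x₁`)
and `x₂² − x₀² − 4x₀`. -/
noncomputable abbrev R3 : Type :=
  MvPolynomial (Fin 3) ℂ ⧸
    Ideal.span {(X 0 * X 1 - 1 : MvPolynomial (Fin 3) ℂ), X 2 ^ 2 - X 0 ^ 2 - 4 * X 0}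

open MvPolynomial in
/-- the class of `t` in `R`. -/
noncomputable def tR : R3 := Ideal.Quotient.mk _ (X 0)

open MvPolynomial in
/-- the class of `t⁻¹` in `R`. -/
noncomputable def tinv : R3 := Ideal.Quotient.mk _ (X 1)

open MvPolynomial in
/-- the class of `u` in `R`. -/
noncomputable def uR : R3 := Ideal.Quotient.mk _ (X 2)

/-- integer powers `tⁿ` of the invertible element `t` of `R`. -/
noncomputable def tpow (n : ℤ) : R3 := if 0 ≤ n then tR ^ n.toNat else tinv ^ (-n).toNat

/-- `eR n = tⁿ D ∈ Der(R)` for a derivation `D`. -/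
noncomputable def eR (D : Derivation ℂ R3 R3) (n : ℤ) : Derivation ℂ R3 R3 :=
  tpow n • D

/-- `dR n = tⁿ u D ∈ Der(R)` for a derivation `D`. -/
noncomputable def dR (D : Derivation ℂ R3 R3) (n : ℤ) : Derivation ℂ R3 R3 :=
  (tpow n * uR) • D

open MvPolynomial in
lemma htt : tR * tinv = 1 := by
  rw [tR, tinv, ← map_mul, ← map_one (Ideal.Quotient.mk _)]
  exact Ideal.Quotient.eq.mpr (Ideal.subset_span (Set.mem_insert _ _))

open MvPolynomial in
lemma hu2 : uR * uR = tR ^ 2 + 4 * tR := by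
  have h : (Ideal.Quotient.mk (Ideal.span {(X 0 * X 1 - 1 : MvPolynomial (Fin 3) ℂ),
      X 2 ^ 2 - X 0 ^ 2 - 4 * X 0})) (X 2 * X 2) =
      Ideal.Quotient.mk _ (X 0 ^ 2 + 4 * X 0) := by
    refine Ideal.Quotient.eq.mpr (Ideal.subset_span ?_)
    have : X 2 * X 2 - (X 0 ^ 2 + 4 * X 0) =
        (X 2 ^ 2 - X 0 ^ 2 - 4 * X 0 : MvPolynomial (Fin 3) ℂ) := by ring
    rw [this]
    exact Set.mem_insert_of_mem _ rfl
  calc uR * uR = Ideal.Quotient.mk _ (X 2 * X 2) := by rw [uR, map_mul]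
    _ = Ideal.Quotient.mk _ (X 0 ^ 2 + 4 * X 0) := h
    _ = tR ^ 2 + 4 * tR := by rw [tR]; simp [map_add, map_mul, map_pow, map_ofNat]

noncomputable def tU : R3ˣ := ⟨tR, tinv, htt, by rw [mul_comm]; exact htt⟩

lemma tpow_eq (n : ℤ) : tpow n = ((tU ^ n : R3ˣ) : R3) := by
  unfold tpow
  split_ifs with h
  · lift n to ℕ using h
    rw [zpow_natCast, Units.val_pow_eq_pow_val, Int.toNat_natCast]
    rfl
  · have hn : n = -((-n).toNat : ℤ) := by omega
    conv_rhs => rw [hn]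
    rw [zpow_neg, zpow_natCast, ← inv_pow, Units.val_pow_eq_pow_val]
    rfl

lemma tpow_add (a b : ℤ) : tpow (a + b) = tpow a * tpow b := by
  rw [tpow_eq, tpow_eq, tpow_eq, zpow_add, Units.val_mul]

lemma tpow_zero : tpow 0 = 1 := by simp [tpow]

lemma tpow_one : tpow 1 = tR := by simp [tpow]

lemma Dtinv (D : Derivation ℂ R3 R3) (hDt : D tR = uR) :
    D tinv = -(tinv * tinv * uR) := by
  have h0 : tR * D tinv + tinv * uR = 0 := by
    have h := congrArg D htt
    rw [Derivation.leibniz, hDt, smul_eq_mul, smul_eq_mul, Derivation.map_one_eq_zero] at h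
    exact h
  linear_combination tinv * h0 - D tinv * htt

lemma Dtpow (D : Derivation ℂ R3 R3) (hDt : D tR = uR) (n : ℤ) :
    D (tpow n) = (n : R3) * (tpow (n - 1) * uR) := by
  induction n using Int.induction_on with
  | zero => simp [tpow_zero]
  | succ k ih =>
    have e1 : tpow ((k : ℤ) + 1) = tpow k * tR := by
      rw [← tpow_one, ← tpow_add]
    have e2 : tpow ((k : ℤ) - 1) * tR = tpow k := by
      rw [← tpow_one, ← tpow_add]; norm_num
    rw [e1, Derivation.leibniz, hDt, ih, smul_eq_mul, smul_eq_mul]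
    have e3 : ((k : ℤ) + 1 - 1) = (k : ℤ) := by ring
    rw [e3]
    push_cast
    linear_combination (k : R3) * uR * e2
  | pred k ih =>
    have e1 : tpow (-(k : ℤ) - 1) = tpow (-k) * tinv := by
      rw [show -(k:ℤ) - 1 = -(k:ℤ) + -1 by ring, tpow_add]
      have h1 : tpow (-1 : ℤ) = tinv := by simp [tpow]
      rw [h1]
    have e2 : tpow (-(k : ℤ)) * (tinv * tinv) = tpow (-(k : ℤ) - 1 - 1) := by
      rw [show (-(k:ℤ) - 1 - 1) = -(k:ℤ) + (-1 + -1) by ring, tpow_add, tpow_add]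
      have : tpow (-1 : ℤ) = tinv := by simp [tpow]
      rw [this]
    have e3 : tinv * tpow (-(k : ℤ) - 1) = tpow (-(k : ℤ) - 1 - 1) := by
      rw [show (-(k:ℤ) - 1 - 1) = -1 + (-(k:ℤ) - 1) by ring, tpow_add]
      have : tpow (-1 : ℤ) = tinv := by simp [tpow]
      rw [this]
    rw [e1, Derivation.leibniz, Dtinv D hDt, ih, smul_eq_mul, smul_eq_mul]
    push_cast
    linear_combination -e2 * uR + (-(k:R3)) * uR * e3

lemma Dd (D : Derivation ℂ R3 R3) (hDt : D tR = uR) (hDu : D uR = tR + 2) (k : ℤ) :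
    D (tpow k * uR) = (k : R3) * (tpow (k + 1) + 4 * tpow k) + (tpow (k + 1) + 2 * tpow k) := by
  have i1 : tpow (k - 1) * tR = tpow k := by
    rw [← tpow_one, ← tpow_add]; norm_num
  have i2 : tpow k * tR = tpow (k + 1) := by
    rw [← tpow_one, ← tpow_add]
  rw [Derivation.leibniz, hDu, Dtpow D hDt, smul_eq_mul, smul_eq_mul]
  linear_combination (k : R3) * tpow (k - 1) * hu2 + ((k : R3) * tR + 4 * (k : R3)) * i1 +
    ((k : R3) + 1) * i2

theorem stmt15 (D : Derivation ℂ R3 R3) (hDt : D tR = uR) (hDu : D uR = tR + 2)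
    (m n : ℤ) :
    ⁅dR D m, dR D n⁆ = (n - m) • (dR D (m + n + 1) + 4 • dR D (m + n)) := by
  ext a
  simp only [Derivation.commutator_apply, dR, Derivation.smul_apply, smul_eq_mul,
    Derivation.add_apply, zsmul_eq_mul, nsmul_eq_mul]
  rw [Derivation.leibniz D (tpow n * uR) (D a), Derivation.leibniz D (tpow m * uR) (D a),
    Dd D hDt hDu n, Dd D hDt hDu m]
  simp only [smul_eq_mul]
  push_cast
  have i3 : tpow m * tpow n = tpow (m + n) := (tpow_add m n).symm
  have i4 : tpow m * tpow (n + 1) = tpow (m + n + 1) := by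
    rw [← tpow_add, show m + (n + 1) = m + n + 1 by ring]
  have i5 : tpow n * tpow (m + 1) = tpow (m + n + 1) := by
    rw [← tpow_add, show n + (m + 1) = m + n + 1 by ring]
  linear_combination ((n : R3) + 1) * uR * D a * i4 - ((m : R3) + 1) * uR * D a * i5 +
    4 * ((n : R3) - (m : R3)) * uR * D a * i3
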